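/- Let G = (N, Act, R) be a first-order grammar, let E, F be terms over N and σ a substitution, and suppose eqlevel(E,F) = k ∈ ℕ while eqlevel(Eσ,Fσ) = e with k < e (e ∈ ℕ ∪ {ω}). Then there exist a variable x_i ∈ supp(σ), a term H with H ≠ x_i, and a word w over Act with |w| ≤ k, such that either (E →w x_i and F →w H) or (E →w H and F →w x_i) in L^act_G (using no special variable transitions x →a_x x), and moreover x_iσ ∼_{e−k} Hσ (with the convention ω − k = ω). -/

import Mathlib

/-- The "signature" of a first-order grammar: a finite set of ranked nonterminals
(represented as `Fin ntCount`, with arities) and a finite set of actions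
(represented as `Fin actCount`). -/
structure GrammarSig where
  ntCount : ℕ
  arity : Fin ntCount → ℕ
  actCount : ℕ

/-- The polynomial functor whose coinductive fixed point is the set of (finite or
infinite) terms over the nonterminals: a node is labelled either by a nonterminal
`A` (with `arity A` ordered children) or by a variable `x_n`, `n : ℕ` (a leaf). -/
def GrammarSig.P (S : GrammarSig) : PFunctor :=
  ⟨Fin S.ntCount ⊕ ℕ, fun l =>
    match l with
    | Sum.inl A => Fin (S.arity A)
    | Sum.inr _ => Empty⟩

/-- Terms over the signature `S`: finite or infinite ordered trees with nodes labelled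
by nonterminals (inner nodes) or variables (leaves). -/
def GTerm (S : GrammarSig) := PFunctor.M S.P

/-- The term consisting of the single variable `x_n`. -/
def GTerm.var (S : GrammarSig) (n : ℕ) : GTerm S :=
  PFunctor.M.mk ⟨Sum.inr n, fun e => e.elim⟩

/-- The term `A(c 0, …, c (m-1))`. -/
def GTerm.app {S : GrammarSig} (A : Fin S.ntCount) (c : Fin (S.arity A) → GTerm S) :
    GTerm S :=
  PFunctor.M.mk ⟨Sum.inl A, c⟩

/-- Applying a substitution `σ` to a term `T`: every occurrence of a variable `x_n`
in `T` is replaced by `σ n` (defined corecursively). -/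
def GTerm.subst {S : GrammarSig} (σ : ℕ → GTerm S) (T : GTerm S) : GTerm S :=
  PFunctor.M.corec
    (fun st : Bool × GTerm S =>
      match PFunctor.M.dest st.2 with
      | ⟨Sum.inl A, c⟩ => ⟨Sum.inl A, fun i => (st.1, c i)⟩
      | ⟨Sum.inr n, _⟩ =>
        if st.1 then
          ⟨(PFunctor.M.dest (σ n)).1, fun i => (false, (PFunctor.M.dest (σ n)).2 i)⟩
        else ⟨Sum.inr n, fun e => e.elim⟩)
    (true, T)

/-- A substitution (as a total map `ℕ → GTerm S`) has finite support. -/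
def FinSupp {S : GrammarSig} (σ : ℕ → GTerm S) : Prop :=
  {n | σ n ≠ GTerm.var S n}.Finite

/-- `childRel S T T'`: `T'` is a root-successor (depth-1 subterm occurrence) of `T`. -/
def childRel (S : GrammarSig) : GTerm S → GTerm S → Prop := fun T T' =>
  ∃ (A : Fin S.ntCount) (c : Fin (S.arity A) → GTerm S), T = GTerm.app A c ∧ ∃ i, T' = c i

/-- `T'` is a subterm of `T`. -/
def SubtermOf (S : GrammarSig) (T' T : GTerm S) : Prop :=
  Relation.ReflTransGen (childRel S) T T'

/-- The variable `x_n` occurs in `T`. -/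
def VarOccurs (S : GrammarSig) (n : ℕ) (T : GTerm S) : Prop :=
  SubtermOf S (GTerm.var S n) T

/-- `OccAtDepth S d T V`: `V` has a subterm-occurrence in `T` at depth `d`. -/
inductive OccAtDepth (S : GrammarSig) : ℕ → GTerm S → GTerm S → Prop
  | refl (T : GTerm S) : OccAtDepth S 0 T T
  | step {d : ℕ} {T T' V : GTerm S} :
      childRel S T T' → OccAtDepth S d T' V → OccAtDepth S (d + 1) T V

/-- A term is regular if it has only finitely many distinct subterms. -/
def RegularT (S : GrammarSig) (T : GTerm S) : Prop := {T' | SubtermOf S T' T}.Finite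

/-- The presentation size of a (regular) term: the number of its distinct subterms. -/
noncomputable def pressize (S : GrammarSig) (T : GTerm S) : ℕ :=
  {T' | SubtermOf S T' T}.ncard

/-- Finite terms over the signature `S`. -/
inductive FTerm (S : GrammarSig) where
  | var : ℕ → FTerm S
  | app : (A : Fin S.ntCount) → (Fin (S.arity A) → FTerm S) → FTerm S

/-- The (finite or infinite) term corresponding to a finite term. -/
def FTerm.toTerm {S : GrammarSig} : FTerm S → GTerm S
  | .var n => GTerm.var S n
  | .app A c => GTerm.app A (fun i => (c i).toTerm)

/-- The variable `x_n` occurs in the finite term `E`. -/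
def FTerm.VOccurs {S : GrammarSig} (n : ℕ) : FTerm S → Prop
  | .var m => m = n
  | .app _ c => ∃ i, (c i).VOccurs n

/-- The depth of a finite term (the largest depth of a subterm occurrence). -/
def FTerm.depth {S : GrammarSig} : FTerm S → ℕ
  | .var _ => 0
  | .app _ c => Finset.univ.sup fun i => (c i).depth + 1

/-- A rule `A(x_0, …, x_{m−1}) →ₐ E` of a first-order grammar: `E` is a finite term
all of whose variables are among `x_0, …, x_{m−1}` where `m = arity A`. -/
structure GRule (S : GrammarSig) where
  nt : Fin S.ntCount
  act : Fin S.actCount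
  rhs : FTerm S
  rhs_wf : ∀ n : ℕ, rhs.VOccurs n → n < S.arity nt

/-- A first-order grammar: a signature together with a finite set (list) of rules. -/
structure FOGrammar where
  sig : GrammarSig
  rules : List (GRule sig)

/-- The term `A(x_0, …, x_{m−1})` (the left-hand side of rules for `A`). -/
def lhsTerm {S : GrammarSig} (A : Fin S.ntCount) : GTerm S :=
  GTerm.app A fun i => GTerm.var S i.val

/-- A labelled transition system with states `S` and actions `A`. -/
structure LTS (S : Type*) (A : Type*) where
  Tr : A → S → S → Prop

namespace LTS

variable {S A : Type*}

/-- An LTS is image-finite if each state has finitely many `a`-successors. -/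
def ImageFinite (L : LTS S A) : Prop := ∀ a s, {t | L.Tr a s t}.Finite

/-- A set `B` of pairs of states covers the pair `p`. -/
def Covers (L : LTS S A) (B : Set (S × S)) (p : S × S) : Prop :=
  (∀ a s', L.Tr a p.1 s' → ∃ t', L.Tr a p.2 t' ∧ (s', t') ∈ B) ∧
  (∀ a t', L.Tr a p.2 t' → ∃ s', L.Tr a p.1 s' ∧ (s', t') ∈ B)

/-- `B'` covers the set `B` (i.e., covers each of its pairs). -/
def CoversSet (L : LTS S A) (B' B : Set (S × S)) : Prop := ∀ p ∈ B, L.Covers B' p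

/-- `B ⊐ B'`: `B'` is a minimal expansion for `B`. -/
def MinExp (L : LTS S A) (B B' : Set (S × S)) : Prop :=
  L.CoversSet B' B ∧ ∀ B'', B'' ⊂ B' → ¬ L.CoversSet B'' B

/-- The stratified equivalences: `∼_0` is everything, `∼_{k+1}` are the pairs covered by `∼_k`. -/
def simN (L : LTS S A) : ℕ → Set (S × S)
  | 0 => Set.univ
  | k + 1 => {p | L.Covers (L.simN k) p}

/-- `eqlevel(s,t) ∈ ℕ ∪ {ω}`: the largest `e` with `s ∼_e t` (`⊤` plays the role of `ω`,
meaning `s ∼_k t` for all `k ∈ ℕ`). -/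
noncomputable def eqlevel (L : LTS S A) (s t : S) : ℕ∞ :=
  sSup {e : ℕ∞ | ∃ k : ℕ, e = (k : ℕ∞) ∧ (s, t) ∈ L.simN k}

/-- `LeastEqLev(B) = min {eqlevel(s,t) | (s,t) ∈ B}`, with `min ∅ = ω = ⊤`. -/
noncomputable def leastEqLev (L : LTS S A) (B : Set (S × S)) : ℕ∞ :=
  sInf {e : ℕ∞ | ∃ p ∈ B, e = L.eqlevel p.1 p.2}

/-- `B` is a bisimulation if it covers itself. -/
def Bisimulation (L : LTS S A) (B : Set (S × S)) : Prop := L.CoversSet B B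

/-- `s ∼ t`: some bisimulation contains `(s,t)`. -/
def Bisim (L : LTS S A) (s t : S) : Prop := ∃ B, L.Bisimulation B ∧ (s, t) ∈ B

end LTS

/-- The rule-based LTS `L^rul_G`: states are the terms, actions are the rules of `G`,
and a rule `r : A(x_0,…,x_{m−1}) →ₐ E` induces `(A(x_0,…,x_{m−1}))σ →r Eσ` for every
substitution `σ`. -/
def LTSrul (G : FOGrammar) : LTS (GTerm G.sig) (GRule G.sig) where
  Tr r T T' := r ∈ G.rules ∧ ∃ σ : ℕ → GTerm G.sig, FinSupp σ ∧
    T = GTerm.subst σ (lhsTerm r.nt) ∧ T' = GTerm.subst σ r.rhs.toTerm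

/-- The action-based LTS `L^act_G`: the transitions of `L^rul_G` relabelled by the
actions of the rules; in addition each variable `x_n` has its own fresh action
(represented by `Sum.inr n`) with the single transition `x_n →_{a_{x_n}} x_n`. -/
def LTSact (G : FOGrammar) : LTS (GTerm G.sig) (Fin G.sig.actCount ⊕ ℕ) where
  Tr a T T' :=
    match a with
    | Sum.inl a => ∃ r : GRule G.sig, r.act = a ∧ (LTSrul G).Tr r T T'
    | Sum.inr n => T = GTerm.var G.sig n ∧ T' = GTerm.var G.sig n

/-- `RPath G T w T'`: the path `T →w T'` in the rule-based LTS `L^rul_G`, `w ∈ R*`. -/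
inductive RPath (G : FOGrammar) : GTerm G.sig → List (GRule G.sig) → GTerm G.sig → Prop
  | nil (T : GTerm G.sig) : RPath G T [] T
  | cons {T T1 T' : GTerm G.sig} {r : GRule G.sig} {w : List (GRule G.sig)} :
      (LTSrul G).Tr r T T1 → RPath G T1 w T' → RPath G T (r :: w) T'

/-- `APath G T w T'`: the path `T →w T'` in the action-based LTS `L^act_G` for a word
`w ∈ Act*` of proper actions (using no special variable transitions). -/
inductive APath (G : FOGrammar) :
    GTerm G.sig → List (Fin G.sig.actCount) → GTerm G.sig → Prop
  | nil (T : GTerm G.sig) : APath G T [] T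
  | cons {T T1 T' : GTerm G.sig} {a : Fin G.sig.actCount} {w : List (Fin G.sig.actCount)} :
      (LTSact G).Tr (Sum.inl a) T T1 → APath G T1 w T' → APath G T (a :: w) T'


namespace GTerm

variable {S : GrammarSig}

/-- The corecursion function used in `subst`. -/
def substFun (σ : ℕ → GTerm S) : Bool × GTerm S → S.P (Bool × GTerm S) :=
  fun st =>
    match PFunctor.M.dest st.2 with
    | ⟨Sum.inl A, c⟩ => ⟨Sum.inl A, fun i => (st.1, c i)⟩
    | ⟨Sum.inr n, _⟩ =>
      if st.1 then
        ⟨(PFunctor.M.dest (σ n)).1, fun i => (false, (PFunctor.M.dest (σ n)).2 i)⟩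
      else ⟨Sum.inr n, fun e => e.elim⟩

theorem subst_eq (σ : ℕ → GTerm S) (T : GTerm S) :
    subst σ T = PFunctor.M.corec (substFun σ) (true, T) := rfl

theorem corec_substFun_false (σ : ℕ → GTerm S) (T : GTerm S) :
    PFunctor.M.corec (substFun σ) (false, T) = T := by
  apply PFunctor.M.bisim (fun x y => x = PFunctor.M.corec (substFun σ) (false, y))
  · rintro x y rfl
    rcases h : PFunctor.M.dest y with ⟨a, g⟩
    have hd : PFunctor.M.dest (PFunctor.M.corec (substFun σ) (false, y))
        = S.P.map (PFunctor.M.corec (substFun σ)) (substFun σ (false, y)) :=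
      PFunctor.M.dest_corec _ _
    cases a with
    | inl A =>
      refine ⟨Sum.inl A, fun i => PFunctor.M.corec (substFun σ) (false, g i), g, ?_, rfl,
        fun i => rfl⟩
      rw [hd]; simp only [substFun, h]; rfl
    | inr n =>
      refine ⟨Sum.inr n, fun e => e.elim, fun e => e.elim, ?_, ?_, fun i => i.elim⟩
      · rw [hd]; simp only [substFun, h, Bool.false_eq_true, reduceIte]
        exact Sigma.ext rfl (heq_of_eq (funext fun e => e.elim))
      · exact Sigma.ext rfl (heq_of_eq (funext fun e => e.elim))
  · rfl

theorem dest_var (n : ℕ) :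
    PFunctor.M.dest (var S n) = ⟨Sum.inr n, fun e => e.elim⟩ := PFunctor.M.dest_mk _

theorem dest_app (A : Fin S.ntCount) (c : Fin (S.arity A) → GTerm S) :
    PFunctor.M.dest (app A c) = ⟨Sum.inl A, c⟩ := PFunctor.M.dest_mk _

theorem subst_var (σ : ℕ → GTerm S) (n : ℕ) : subst σ (var S n) = σ n := by
  rw [← PFunctor.M.mk_dest (subst σ (var S n)), ← PFunctor.M.mk_dest (σ n)]
  congr 1
  rw [subst_eq, PFunctor.M.dest_corec]
  simp only [substFun, dest_var, reduceIte]
  rcases h : PFunctor.M.dest (σ n) with ⟨a, g⟩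
  simp only [PFunctor.map_eq]
  refine Sigma.ext rfl (heq_of_eq ?_)
  funext i
  simp only [Function.comp_apply, corec_substFun_false]
  exact corec_substFun_false σ (g i)

theorem subst_app (σ : ℕ → GTerm S) (A : Fin S.ntCount) (c : Fin (S.arity A) → GTerm S) :
    subst σ (app A c) = app A (fun i => subst σ (c i)) := by
  rw [← PFunctor.M.mk_dest (subst σ (app A c))]
  congr 1

end GTerm

namespace GTerm

variable {S : GrammarSig}

theorem cases_shape (T : GTerm S) :
    (∃ n, T = var S n) ∨ ∃ A c, T = app A c := by
  rcases h : PFunctor.M.dest T with ⟨a, g⟩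
  have hT : T = PFunctor.M.mk ⟨a, g⟩ := by rw [← h]; exact (PFunctor.M.mk_dest T).symm
  cases a with
  | inl A => exact Or.inr ⟨A, g, hT⟩
  | inr n =>
    refine Or.inl ⟨n, ?_⟩
    rw [hT]; unfold var; congr; funext e; exact e.elim

theorem var_inj {n m : ℕ} (h : var S n = var S m) : n = m := by
  have h2 := congrArg (fun T => (PFunctor.M.dest T).1) h
  simp only [dest_var] at h2
  exact Sum.inr.inj h2

theorem var_ne_app {n : ℕ} {A : Fin S.ntCount} {c : Fin (S.arity A) → GTerm S} :
    var S n ≠ app A c := by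
  intro h
  have := congrArg (fun T => (PFunctor.M.dest T).1) h
  simp [dest_var, dest_app] at this

theorem app_inj {A B : Fin S.ntCount} {c : Fin (S.arity A) → GTerm S}
    {d : Fin (S.arity B) → GTerm S} (h : app A c = app B d) :
    ∃ hAB : A = B, ∀ (n : ℕ) (h1 : n < S.arity A) (h2 : n < S.arity B),
      c ⟨n, h1⟩ = d ⟨n, h2⟩ := by
  have h2 : (⟨Sum.inl A, c⟩ : S.P (GTerm S)) = ⟨Sum.inl B, d⟩ := by
    exact (dest_app A c).symm.trans ((congrArg (fun T => PFunctor.M.dest T) h).trans (dest_app B d))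
  have hAB : A = B := by
    have h3 := congrArg Sigma.fst h2
    exact Sum.inl.inj h3
  subst hAB
  refine ⟨rfl, fun n h1 h2' => ?_⟩
  injection h2 with h3 h4
  rw [h4]

theorem subst_comp (σ τ : ℕ → GTerm S) (T : GTerm S) :
    subst σ (subst τ T) = subst (fun n => subst σ (τ n)) T := by
  apply PFunctor.M.bisim (fun x y =>
    (∃ T, x = subst σ (subst τ T) ∧ y = subst (fun n => subst σ (τ n)) T) ∨ x = y)
  · rintro x y (⟨T, rfl, rfl⟩ | rfl)
    · rcases cases_shape T with ⟨n, rfl⟩ | ⟨A, c, rfl⟩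
      · rw [subst_var, subst_var]
        rcases h : PFunctor.M.dest (subst σ (τ n)) with ⟨a, g⟩
        exact ⟨a, g, g, rfl, rfl, fun i => Or.inr rfl⟩
      · rw [subst_app, subst_app, subst_app]
        refine ⟨Sum.inl A, _, _, dest_app _ _, dest_app _ _, fun i => Or.inl ⟨c i, rfl, rfl⟩⟩
    · rcases h : PFunctor.M.dest x with ⟨a, g⟩
      exact ⟨a, g, g, rfl, rfl, fun i => Or.inr rfl⟩
  · exact Or.inl ⟨T, rfl, rfl⟩

/-- Substitutions agreeing on the variables of a finite term give the same result. -/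
theorem subst_agree {σ τ : ℕ → GTerm S} (E : FTerm S)
    (h : ∀ n, E.VOccurs n → σ n = τ n) :
    subst σ E.toTerm = subst τ E.toTerm := by
  induction E with
  | var n => rw [FTerm.toTerm, subst_var, subst_var]; exact h n rfl
  | app A c ih =>
    rw [FTerm.toTerm, subst_app, subst_app]
    congr 1
    funext i
    exact ih i (fun n hn => h n ⟨i, hn⟩)

/-- The identity substitution is the identity. -/
theorem subst_id (T : GTerm S) : subst (fun n => var S n) T = T := by
  apply PFunctor.M.bisim (fun x y => x = subst (fun n => var S n) y)
  · rintro x y rfl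
    rcases cases_shape y with ⟨n, rfl⟩ | ⟨A, c, rfl⟩
    · rw [subst_var]
      exact ⟨Sum.inr n, fun e => e.elim, fun e => e.elim, dest_var n, dest_var n, fun i => i.elim⟩
    · rw [subst_app]
      exact ⟨Sum.inl A, _, _, dest_app _ _, dest_app _ _, fun i => rfl⟩
  · rfl

end GTerm

section Transitions

variable {S : GrammarSig}

/-- Extend a tuple of terms to a substitution. -/
noncomputable def extSub {A : Fin S.ntCount} (c : Fin (S.arity A) → GTerm S) : ℕ → GTerm S :=
  fun n => if h : n < S.arity A then c ⟨n, h⟩ else GTerm.var S n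

theorem finSupp_extSub {A : Fin S.ntCount} (c : Fin (S.arity A) → GTerm S) :
    FinSupp (extSub c) := by
  apply Set.Finite.subset (Set.finite_Iio (S.arity A))
  intro n hn
  by_contra h
  simp only [Set.mem_Iio, not_lt] at h
  exact hn (by simp [extSub, Nat.not_lt.mpr h])

theorem subst_lhsTerm (τ : ℕ → GTerm S) (A : Fin S.ntCount) :
    GTerm.subst τ (lhsTerm A) = GTerm.app A (fun i => τ i.val) := by
  rw [lhsTerm, GTerm.subst_app]
  congr 1
  funext i
  rw [GTerm.subst_var]

variable {G : FOGrammar}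

theorem tr_app_iff {r : GRule G.sig} {A : Fin G.sig.ntCount}
    {c : Fin (G.sig.arity A) → GTerm G.sig} {T' : GTerm G.sig} :
    (LTSrul G).Tr r (GTerm.app A c) T' ↔
      r ∈ G.rules ∧ ∃ h : r.nt = A,
        T' = GTerm.subst (extSub c) r.rhs.toTerm := by
  constructor
  · rintro ⟨hr, σ', hσ', hEq, rfl⟩
    rw [subst_lhsTerm] at hEq
    obtain ⟨hAB, hc⟩ := GTerm.app_inj hEq.symm
    subst hAB
    refine ⟨hr, rfl, ?_⟩
    apply GTerm.subst_agree
    intro n hn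
    have hlt := r.rhs_wf n hn
    simp only [extSub, dif_pos hlt]
    have h5 := hc n hlt hlt
    exact h5
  · rintro ⟨hr, hAB, rfl⟩
    subst hAB
    refine ⟨hr, extSub c, finSupp_extSub c, ?_, rfl⟩
    rw [subst_lhsTerm]
    congr 1
    funext i
    simp [extSub, i.isLt]

theorem no_tr_var {r : GRule G.sig} {n : ℕ} {T' : GTerm G.sig} :
    ¬ (LTSrul G).Tr r (GTerm.var G.sig n) T' := by
  rintro ⟨hr, σ', hσ', hEq, _⟩
  rw [subst_lhsTerm] at hEq
  exact GTerm.var_ne_app hEq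

/-- Forward commuting of substitution with rule transitions (from non-variable terms). -/
theorem tr_subst_fwd {r : GRule G.sig} {A : Fin G.sig.ntCount}
    {c : Fin (G.sig.arity A) → GTerm G.sig} {T' : GTerm G.sig} (σ : ℕ → GTerm G.sig)
    (h : (LTSrul G).Tr r (GTerm.app A c) T') :
    (LTSrul G).Tr r (GTerm.subst σ (GTerm.app A c)) (GTerm.subst σ T') := by
  rw [tr_app_iff] at h
  obtain ⟨hr, hAB, rfl⟩ := h
  subst hAB
  rw [GTerm.subst_app, tr_app_iff]
  refine ⟨hr, rfl, ?_⟩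
  rw [GTerm.subst_comp]
  apply GTerm.subst_agree
  intro n hn
  have hlt := r.rhs_wf n hn
  simp [extSub, dif_pos hlt]

/-- Backward commuting of substitution with rule transitions. -/
theorem tr_subst_bwd {r : GRule G.sig} {A : Fin G.sig.ntCount}
    {c : Fin (G.sig.arity A) → GTerm G.sig} {T : GTerm G.sig} (σ : ℕ → GTerm G.sig)
    (h : (LTSrul G).Tr r (GTerm.subst σ (GTerm.app A c)) T) :
    ∃ T', (LTSrul G).Tr r (GTerm.app A c) T' ∧ T = GTerm.subst σ T' := by
  rw [GTerm.subst_app, tr_app_iff] at h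
  obtain ⟨hr, hAB, rfl⟩ := h
  subst hAB
  refine ⟨GTerm.subst (extSub c) r.rhs.toTerm, tr_app_iff.mpr ⟨hr, rfl, rfl⟩, ?_⟩
  rw [GTerm.subst_comp]
  apply GTerm.subst_agree
  intro n hn
  have hlt := r.rhs_wf n hn
  simp [extSub, dif_pos hlt, GTerm.subst_var]

/-- Action-level: no proper transitions from a variable. -/
theorem no_atr_var {a : Fin G.sig.actCount} {n : ℕ} {T' : GTerm G.sig} :
    ¬ (LTSact G).Tr (Sum.inl a) (GTerm.var G.sig n) T' := by
  rintro ⟨r, _, hTr⟩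
  exact no_tr_var hTr

/-- Action-level: no special transitions from a non-variable. -/
theorem no_str_app {m : ℕ} {A : Fin G.sig.ntCount} {c : Fin (G.sig.arity A) → GTerm G.sig}
    {T' : GTerm G.sig} : ¬ (LTSact G).Tr (Sum.inr m) (GTerm.app A c) T' := by
  rintro ⟨hEq, -⟩
  exact GTerm.var_ne_app hEq.symm

theorem str_var {m n : ℕ} {T' : GTerm G.sig}
    (h : (LTSact G).Tr (Sum.inr m) (GTerm.var G.sig n) T') :
    n = m ∧ T' = GTerm.var G.sig n := by
  obtain ⟨h1, h2⟩ := h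
  have := GTerm.var_inj h1
  subst this
  exact ⟨rfl, h2⟩

theorem str_self (n : ℕ) :
    (LTSact G).Tr (Sum.inr n) (GTerm.var G.sig n) (GTerm.var G.sig n) := ⟨rfl, rfl⟩

theorem atr_subst_fwd {a : Fin G.sig.actCount} {A : Fin G.sig.ntCount}
    {c : Fin (G.sig.arity A) → GTerm G.sig} {T' : GTerm G.sig} (σ : ℕ → GTerm G.sig)
    (h : (LTSact G).Tr (Sum.inl a) (GTerm.app A c) T') :
    (LTSact G).Tr (Sum.inl a) (GTerm.subst σ (GTerm.app A c)) (GTerm.subst σ T') := by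
  obtain ⟨r, hr, hTr⟩ := h
  exact ⟨r, hr, tr_subst_fwd σ hTr⟩

theorem atr_subst_bwd {a : Fin G.sig.actCount} {A : Fin G.sig.ntCount}
    {c : Fin (G.sig.arity A) → GTerm G.sig} {T : GTerm G.sig} (σ : ℕ → GTerm G.sig)
    (h : (LTSact G).Tr (Sum.inl a) (GTerm.subst σ (GTerm.app A c)) T) :
    ∃ T', (LTSact G).Tr (Sum.inl a) (GTerm.app A c) T' ∧ T = GTerm.subst σ T' := by
  obtain ⟨r, hr, hTr⟩ := h
  obtain ⟨T', hT', rfl⟩ := tr_subst_bwd σ hTr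
  exact ⟨T', ⟨r, hr, hT'⟩, rfl⟩

/-- The set of `a`-successors of a term is finite. -/
theorem targets_finite (a : Fin G.sig.actCount) (A : Fin G.sig.ntCount)
    (c : Fin (G.sig.arity A) → GTerm G.sig) :
    {T' | (LTSact G).Tr (Sum.inl a) (GTerm.app A c) T'}.Finite := by
  apply Set.Finite.subset (Set.Finite.image
    (fun r : GRule G.sig => GTerm.subst (extSub c) r.rhs.toTerm) G.rules.finite_toSet)
  rintro T' ⟨r, hra, hTr⟩
  rw [tr_app_iff] at hTr
  obtain ⟨hr, hAB, rfl⟩ := hTr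
  subst hAB
  exact ⟨r, hr, rfl⟩

end Transitions

namespace LTS

variable {St A : Type*} (L : LTS St A)

theorem covers_mono {B B' : Set (St × St)} (h : B ⊆ B') {p : St × St}
    (hc : L.Covers B p) : L.Covers B' p := by
  refine ⟨fun a s' hs' => ?_, fun a t' ht' => ?_⟩
  · obtain ⟨t', ht', hmem⟩ := hc.1 a s' hs'
    exact ⟨t', ht', h hmem⟩
  · obtain ⟨s', hs', hmem⟩ := hc.2 a t' ht'
    exact ⟨s', hs', h hmem⟩

theorem simN_succ_subset : ∀ k : ℕ, L.simN (k + 1) ⊆ L.simN k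
  | 0 => fun p _ => Set.mem_univ p
  | k + 1 => fun p hp => L.covers_mono (simN_succ_subset k) hp

theorem simN_subset_of_le {m n : ℕ} (h : m ≤ n) : L.simN n ⊆ L.simN m := by
  induction h with
  | refl => exact subset_rfl
  | step h ih => exact fun p hp => ih (L.simN_succ_subset _ hp)

theorem simN_refl (k : ℕ) (s : St) : (s, s) ∈ L.simN k := by
  induction k generalizing s with
  | zero => trivial
  | succ k ih =>
    exact ⟨fun a s' hs' => ⟨s', hs', ih s'⟩, fun a t' ht' => ⟨t', ht', ih t'⟩⟩

theorem simN_symm {k : ℕ} {s t : St} (h : (s, t) ∈ L.simN k) : (t, s) ∈ L.simN k := by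
  induction k generalizing s t with
  | zero => trivial
  | succ k ih =>
    refine ⟨fun a s' hs' => ?_, fun a t' ht' => ?_⟩
    · obtain ⟨t', ht', hmem⟩ := h.2 a s' hs'
      exact ⟨t', ht', ih hmem⟩
    · obtain ⟨s', hs', hmem⟩ := h.1 a t' ht'
      exact ⟨s', hs', ih hmem⟩

theorem le_eqlevel_iff {s t : St} {m : ℕ} :
    (m : ℕ∞) ≤ L.eqlevel s t ↔ (s, t) ∈ L.simN m := by
  constructor
  · intro h
    by_contra hmem
    rcases m with - | m'
    · exact hmem trivial
    have hb : ∀ e ∈ {e : ℕ∞ | ∃ k : ℕ, e = (k : ℕ∞) ∧ (s, t) ∈ L.simN k},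
        e ≤ (m' : ℕ∞) := by
      rintro e ⟨k, rfl, hk⟩
      have hk' : k ≤ m' := by
        by_contra hk'
        exact hmem (L.simN_subset_of_le (by omega) hk)
      exact_mod_cast hk'
    have := le_trans h (sSup_le hb)
    have : (m' + 1 : ℕ) ≤ m' := by exact_mod_cast this
    omega
  · intro h
    exact le_sSup ⟨m, rfl, h⟩

theorem eqlevel_symm (s t : St) : L.eqlevel s t = L.eqlevel t s := by
  unfold eqlevel
  congr 1
  ext e
  exact ⟨fun ⟨k, he, hk⟩ => ⟨k, he, L.simN_symm hk⟩, fun ⟨k, he, hk⟩ => ⟨k, he, L.simN_symm hk⟩⟩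

theorem mem_simN_of_eqlevel_eq {s t : St} {k : ℕ} (h : L.eqlevel s t = (k : ℕ∞)) :
    (s, t) ∈ L.simN k := L.le_eqlevel_iff.mp h.ge

theorem not_mem_simN_succ_of_eqlevel_eq {s t : St} {k : ℕ} (h : L.eqlevel s t = (k : ℕ∞)) :
    (s, t) ∉ L.simN (k + 1) := by
  intro hmem
  have := L.le_eqlevel_iff.mpr hmem
  rw [h] at this
  have : (k + 1 : ℕ) ≤ k := by exact_mod_cast this
  omega

end LTS

section Main

variable {G : FOGrammar}

theorem mem_simN_succ {St A : Type*} {L : LTS St A} {p : St × St} {k : ℕ} :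
    p ∈ L.simN (k + 1) ↔ L.Covers (L.simN k) p := Iff.rfl

theorem enat_eq_top_of_forall {x : ℕ∞} (h : ∀ m : ℕ, (m : ℕ∞) ≤ x) : x = ⊤ := by
  induction x using ENat.recTopCoe with
  | top => rfl
  | coe n =>
    have := h (n + 1)
    have : n + 1 ≤ n := by exact_mod_cast this
    omega

/-- The conclusion of Statement 11. -/
def Concl (G : FOGrammar) (σ : ℕ → GTerm G.sig) (k : ℕ) (e : ℕ∞)
    (E F : GTerm G.sig) : Prop :=
  ∃ (i : ℕ) (H : GTerm G.sig) (w : List (Fin G.sig.actCount)),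
    σ i ≠ GTerm.var G.sig i ∧ H ≠ GTerm.var G.sig i ∧ w.length ≤ k ∧
    ((APath G E w (GTerm.var G.sig i) ∧ APath G F w H) ∨
      (APath G E w H ∧ APath G F w (GTerm.var G.sig i))) ∧
    e - (k : ℕ∞) ≤ (LTSact G).eqlevel (σ i) (GTerm.subst σ H)

theorem Concl.symm {σ : ℕ → GTerm G.sig} {k : ℕ} {e : ℕ∞} {E F : GTerm G.sig}
    (h : Concl G σ k e F E) : Concl G σ k e E F := by
  obtain ⟨i, H, w, h1, h2, h3, h4, h5⟩ := h
  exact ⟨i, H, w, h1, h2, h3,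
    (h4.imp (fun ⟨a, b⟩ => ⟨b, a⟩) (fun ⟨a, b⟩ => ⟨b, a⟩)).symm, h5⟩

theorem sim1_var {i : ℕ} {T : GTerm G.sig}
    (h : (GTerm.var G.sig i, T) ∈ (LTSact G).simN 1) : T = GTerm.var G.sig i := by
  obtain ⟨t', htr, -⟩ := h.1 (Sum.inr i) _ (str_self i)
  rcases GTerm.cases_shape T with ⟨n, rfl⟩ | ⟨B, d, rfl⟩
  · obtain ⟨rfl, -⟩ := str_var htr
    rfl
  · exact absurd htr no_str_app

theorem one_le_of_lt {k : ℕ} {e : ℕ∞} (h : (k : ℕ∞) < e) : 1 ≤ e := by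
  induction e using ENat.recTopCoe with
  | top => exact le_top
  | coe n =>
    have : k < n := by exact_mod_cast h
    exact_mod_cast Nat.one_le_iff_ne_zero.mpr (by omega)

theorem le_add_one_of {e x : ℕ∞} (h : ∀ m : ℕ, ((m : ℕ∞) + 1) ≤ e → (m : ℕ∞) ≤ x) :
    e ≤ x + 1 := by
  induction e using ENat.recTopCoe with
  | top =>
    have hx : x = ⊤ := enat_eq_top_of_forall (fun m => h m le_top)
    rw [hx]
    exact le_top
  | coe m =>
    rcases m with - | m'
    · exact_mod_cast (zero_le : (0:ℕ∞) ≤ x + 1)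
    · have hm := h m' (by push_cast; rfl)
      calc ((m' + 1 : ℕ) : ℕ∞) = (m' : ℕ∞) + 1 := by push_cast; rfl
        _ ≤ x + 1 := add_le_add_left hm 1

/-- The case where `E` is a variable. -/
theorem case_var (σ : ℕ → GTerm G.sig) {i : ℕ} {F : GTerm G.sig} {k : ℕ} {e : ℕ∞}
    (hEF : (LTSact G).eqlevel (GTerm.var G.sig i) F = (k : ℕ∞))
    (hEFσ : (LTSact G).eqlevel (GTerm.subst σ (GTerm.var G.sig i)) (GTerm.subst σ F) = e)
    (hlt : (k : ℕ∞) < e) : Concl G σ k e (GTerm.var G.sig i) F := by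
  have h1e : (1 : ℕ∞) ≤ e := one_le_of_lt hlt
  have hsim1 : (GTerm.subst σ (GTerm.var G.sig i), GTerm.subst σ F) ∈ (LTSact G).simN 1 :=
    (LTSact G).le_eqlevel_iff.mp (by rw [hEFσ]; exact_mod_cast h1e)
  have hsub : e - (k : ℕ∞) ≤ e := tsub_le_self
  rcases GTerm.cases_shape F with ⟨j, rfl⟩ | ⟨B, d, rfl⟩
  · -- F = var j
    have hij : i ≠ j := by
      rintro rfl
      exact (LTSact G).not_mem_simN_succ_of_eqlevel_eq hEF ((LTSact G).simN_refl _ _)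
    by_cases hσi : σ i = GTerm.var G.sig i
    · -- then σ j ≠ var j
      have hσj : σ j ≠ GTerm.var G.sig j := by
        intro hσj
        rw [GTerm.subst_var, GTerm.subst_var, hσi, hσj] at hsim1
        exact hij (GTerm.var_inj (sim1_var hsim1)).symm
      refine ⟨j, GTerm.var G.sig i, [], hσj, fun h => hij (GTerm.var_inj h), by simp,
        Or.inr ⟨APath.nil _, APath.nil _⟩, ?_⟩
      refine le_trans hsub ?_
      rw [GTerm.subst_var]
      rw [← hEFσ, GTerm.subst_var, GTerm.subst_var]
      exact le_of_eq ((LTSact G).eqlevel_symm _ _)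
    · refine ⟨i, GTerm.var G.sig j, [], hσi, fun h => hij (GTerm.var_inj h).symm, by simp,
        Or.inl ⟨APath.nil _, APath.nil _⟩, ?_⟩
      refine le_trans hsub ?_
      rw [← hEFσ, GTerm.subst_var, GTerm.subst_var]
  · -- F = app B d
    have hσi : σ i ≠ GTerm.var G.sig i := by
      intro hσi
      rw [GTerm.subst_var, hσi, GTerm.subst_app] at hsim1
      exact GTerm.var_ne_app (sim1_var hsim1).symm
    refine ⟨i, GTerm.app B d, [], hσi, fun h => GTerm.var_ne_app h.symm, by simp,
      Or.inl ⟨APath.nil _, APath.nil _⟩, ?_⟩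
    refine le_trans hsub ?_
    rw [← hEFσ, GTerm.subst_var]

theorem tsub_le_tsub_enat {e x : ℕ∞} {k k' : ℕ} (h1 : e ≤ x + 1) (h2 : k' < k)
    (h3 : (k : ℕ∞) ≤ x) : e - (k : ℕ∞) ≤ x - (k' : ℕ∞) := by
  induction x using ENat.recTopCoe with
  | top => rw [ENat.top_sub_coe]; exact le_top
  | coe n =>
    induction e using ENat.recTopCoe with
    | top =>
      exfalso
      have : ((n + 1 : ℕ) : ℕ∞) = ⊤ := top_le_iff.mp (le_trans h1 (by push_cast; rfl))
      exact ENat.coe_ne_top _ this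
    | coe m =>
      rw [← ENat.coe_sub, ← ENat.coe_sub]
      have hm : m ≤ n + 1 := by exact_mod_cast h1
      have hk : k ≤ n := by exact_mod_cast h3
      exact_mod_cast (by omega : m - k ≤ n - k')

/-- The main step: `E`, `F` non-variables, mismatch on `E`'s side. -/
theorem step_case (σ : ℕ → GTerm G.sig) {k : ℕ} {e : ℕ∞}
    (IH : ∀ k' < k, ∀ E F : GTerm G.sig, (LTSact G).eqlevel E F = (k' : ℕ∞) →
      (k' : ℕ∞) < (LTSact G).eqlevel (GTerm.subst σ E) (GTerm.subst σ F) →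
      Concl G σ k' ((LTSact G).eqlevel (GTerm.subst σ E) (GTerm.subst σ F)) E F)
    {A : Fin G.sig.ntCount} {c : Fin (G.sig.arity A) → GTerm G.sig}
    {B : Fin G.sig.ntCount} {d : Fin (G.sig.arity B) → GTerm G.sig}
    (hEFσ : (LTSact G).eqlevel (GTerm.subst σ (GTerm.app A c))
      (GTerm.subst σ (GTerm.app B d)) = e)
    (hlt : (k : ℕ∞) < e)
    {a : Fin G.sig.actCount} {E' : GTerm G.sig}
    (hTrE : (LTSact G).Tr (Sum.inl a) (GTerm.app A c) E')
    (hmis : ∀ F', (LTSact G).Tr (Sum.inl a) (GTerm.app B d) F' →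
      (E', F') ∉ (LTSact G).simN k) :
    Concl G σ k e (GTerm.app A c) (GTerm.app B d) := by
  set E := GTerm.app A c with hE
  set F := GTerm.app B d with hF
  have hk1e : ((k : ℕ∞) + 1) ≤ e := (ENat.add_one_le_iff (by simp)).mpr hlt
  -- key: for every m with m+1 ≤ e there is a matching F-successor
  have key : ∀ m : ℕ, ((m : ℕ∞) + 1) ≤ e → ∃ F'', (LTSact G).Tr (Sum.inl a) F F'' ∧
      (m : ℕ∞) ≤ (LTSact G).eqlevel (GTerm.subst σ E') (GTerm.subst σ F'') := by
    intro m hm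
    have hsim : (GTerm.subst σ E, GTerm.subst σ F) ∈ (LTSact G).simN (m + 1) :=
      (LTSact G).le_eqlevel_iff.mp (by rw [hEFσ]; exact_mod_cast hm)
    obtain ⟨T, hT, hmemT⟩ := hsim.1 (Sum.inl a) _ (atr_subst_fwd σ hTrE)
    obtain ⟨F'', hF'', rfl⟩ := atr_subst_bwd σ hT
    exact ⟨F'', hF'', (LTSact G).le_eqlevel_iff.mpr hmemT⟩
  have h1e : ((0 : ℕ∞) + 1) ≤ e := by
    refine le_trans ?_ hk1e
    exact add_le_add_left (by simp) 1
  obtain ⟨F0, hF0, -⟩ := key 0 h1e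
  obtain ⟨F', hF', hmax⟩ := Set.exists_max_image {F'' | (LTSact G).Tr (Sum.inl a) F F''}
    (fun F'' => (LTSact G).eqlevel (GTerm.subst σ E') (GTerm.subst σ F''))
    (targets_finite a B d) ⟨F0, hF0⟩
  set g := fun F'' => (LTSact G).eqlevel (GTerm.subst σ E') (GTerm.subst σ F'') with hg
  have hge : ∀ m : ℕ, ((m : ℕ∞) + 1) ≤ e → (m : ℕ∞) ≤ g F' := by
    intro m hm
    obtain ⟨F'', hF'', hle⟩ := key m hm
    exact le_trans hle (hmax F'' hF'')
  have hkle : (k : ℕ∞) ≤ g F' := hge k hk1e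
  have hek : e ≤ g F' + 1 := le_add_one_of hge
  have hnotk : (E', F') ∉ (LTSact G).simN k := hmis F' hF'
  have hfin : (LTSact G).eqlevel E' F' ≠ ⊤ := fun h =>
    hnotk ((LTSact G).le_eqlevel_iff.mp (h ▸ le_top))
  obtain ⟨k', heq⟩ := WithTop.ne_top_iff_exists.mp hfin
  have hmem' : (E', F') ∈ (LTSact G).simN k' := (LTSact G).le_eqlevel_iff.mp heq.le
  have hk'k : k' < k := by
    by_contra h
    exact hnotk ((LTSact G).simN_subset_of_le (not_lt.mp h) hmem')
  have hlt' : (k' : ℕ∞) < g F' := lt_of_lt_of_le (by exact_mod_cast hk'k) hkle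
  obtain ⟨i, H, w, h1, h2, h3, h4, h5⟩ := IH k' hk'k E' F' heq.symm hlt'
  refine ⟨i, H, a :: w, h1, h2, ?_, ?_, ?_⟩
  · simp only [List.length_cons]
    omega
  · rcases h4 with ⟨pE, pF⟩ | ⟨pE, pF⟩
    · exact Or.inl ⟨APath.cons hTrE pE, APath.cons hF' pF⟩
    · exact Or.inr ⟨APath.cons hTrE pE, APath.cons hF' pF⟩
  · exact le_trans (tsub_le_tsub_enat hek hk'k hkle) h5

theorem main_ind (σ : ℕ → GTerm G.sig) : ∀ k : ℕ, ∀ E F : GTerm G.sig,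
    (LTSact G).eqlevel E F = (k : ℕ∞) →
    (k : ℕ∞) < (LTSact G).eqlevel (GTerm.subst σ E) (GTerm.subst σ F) →
    Concl G σ k ((LTSact G).eqlevel (GTerm.subst σ E) (GTerm.subst σ F)) E F := by
  intro k
  induction k using Nat.strong_induction_on with
  | _ k IH =>
  intro E F hEF hlt
  rcases GTerm.cases_shape E with ⟨i, rfl⟩ | ⟨A, c, rfl⟩
  · exact case_var σ hEF rfl hlt
  rcases GTerm.cases_shape F with ⟨j, rfl⟩ | ⟨B, d, rfl⟩
  · have hsymm := (LTSact G).eqlevel_symm (GTerm.subst σ (GTerm.var G.sig j))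
      (GTerm.subst σ (GTerm.app A c))
    exact Concl.symm (case_var σ (((LTSact G).eqlevel_symm _ _).trans hEF) hsymm
      (hsymm.symm ▸ hlt))
  · have hnot : (GTerm.app A c, GTerm.app B d) ∉ (LTSact G).simN (k + 1) :=
      (LTSact G).not_mem_simN_succ_of_eqlevel_eq hEF
    rw [mem_simN_succ, LTS.Covers, not_and_or] at hnot
    rcases hnot with h | h
    · push_neg at h
      obtain ⟨a, E', hTrE, hmis⟩ := h
      match a with
      | Sum.inl a => exact step_case σ (fun k' hk' => IH k' hk') rfl hlt hTrE hmis
      | Sum.inr m => exact absurd hTrE no_str_app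
    · push_neg at h
      obtain ⟨a, F', hTrF, hmis⟩ := h
      match a with
      | Sum.inl a =>
        have hsymm := (LTSact G).eqlevel_symm (GTerm.subst σ (GTerm.app B d))
          (GTerm.subst σ (GTerm.app A c))
        exact Concl.symm (step_case σ (fun k' hk' => IH k' hk') hsymm (hsymm.symm ▸ hlt)
          hTrF (fun E'' hE'' hmem => hmis _ hE'' ((LTSact G).simN_symm hmem)))
      | Sum.inr m => exact absurd hTrF no_str_app

end Main

/-- if `eqlevel(E,F) = k < e = eqlevel(Eσ,Fσ)`, then there are
`x_i ∈ supp(σ)`, a term `H ≠ x_i`, and a word `w` over `Act` with `|w| ≤ k` such that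
(`E →w x_i` and `F →w H`) or (`E →w H` and `F →w x_i`) in `L^act_G` (using no special
variable transitions), and `x_iσ ∼_{e−k} Hσ` (i.e. `eqlevel(x_iσ, Hσ) ≥ e − k`,
with `ω − k = ω`). -/
theorem eqlevel_increase_gives_equation (G : FOGrammar) (E F : GTerm G.sig)
    (σ : ℕ → GTerm G.sig) (hσ : FinSupp σ) (k : ℕ) (e : ℕ∞)
    (hEF : (LTSact G).eqlevel E F = (k : ℕ∞))
    (hEFσ : (LTSact G).eqlevel (GTerm.subst σ E) (GTerm.subst σ F) = e)
    (hlt : (k : ℕ∞) < e) :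
    ∃ (i : ℕ) (H : GTerm G.sig) (w : List (Fin G.sig.actCount)),
      σ i ≠ GTerm.var G.sig i ∧ H ≠ GTerm.var G.sig i ∧ w.length ≤ k ∧
      ((APath G E w (GTerm.var G.sig i) ∧ APath G F w H) ∨
        (APath G E w H ∧ APath G F w (GTerm.var G.sig i))) ∧
      e - (k : ℕ∞) ≤ (LTSact G).eqlevel (σ i) (GTerm.subst σ H) := by
  have hC := main_ind (G := G) σ k E F hEF (by rw [hEFσ]; exact hlt)
  rw [hEFσ] at hC
  exact hC
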